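/- Let n ≥ 6 and let π = (d_1, …, d_n) be a graphic sequence that is potentially K_{3,3}-graphic. If d_2 = n − 1, then d_3 ≥ 5 or d_6 ≥ 4. -/

import Mathlib

section helpers

lemma countP_le_of_getD_lt (c : ℕ) : ∀ (π : List ℕ), π.Pairwise (· ≥ ·) → ∀ k, π.getD k 0 < c →
    π.countP (fun x => decide (c ≤ x)) ≤ k := by
  intro π hs
  induction π with
  | nil => intro k _; simp
  | cons a l ih =>
    intro k hk
    cases k with
    | zero =>
      simp only [List.getD_cons_zero] at hk
      rw [List.countP_cons]
      have h1 : ¬ (c ≤ a) := by omega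
      have h2 : l.countP (fun x => decide (c ≤ x)) = 0 := by
        rw [List.countP_eq_zero]
        intro x hx
        have : x ≤ a := (List.pairwise_cons.1 hs).1 x hx
        simp; omega
      simp [h1, h2]
    | succ k =>
      simp only [List.getD_cons_succ] at hk
      rw [List.countP_cons]
      have := ih hs.of_cons k hk
      split <;> omega

lemma getD_ge_of_count (π : List ℕ) (hs : π.Pairwise (· ≥ ·)) (k c : ℕ)
    (h : k < π.countP (fun x => decide (c ≤ x))) : c ≤ π.getD k 0 := by
  by_contra hc
  have := countP_le_of_getD_lt c π hs k (by omega)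
  omega

def IsDegSeqOf' {V : Type} [Fintype V] (G : SimpleGraph V) (π : List ℕ) : Prop :=
  Multiset.map (fun v => (G.neighborSet v).ncard) Finset.univ.val = (π : Multiset ℕ)

lemma getD_ge_of_many {V : Type} [Fintype V] (G : SimpleGraph V) (π : List ℕ)
    (hdeg : IsDegSeqOf' G π) (hs : π.Pairwise (· ≥ ·)) (k c : ℕ)
    (T : Finset V) (hT : ∀ v ∈ T, c ≤ (G.neighborSet v).ncard) (hcard : k < T.card) :
    c ≤ π.getD k 0 := by
  apply getD_ge_of_count π hs
  have h1 : Multiset.countP (fun x => c ≤ x) (π : Multiset ℕ)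
      = π.countP (fun x => decide (c ≤ x)) := rfl
  rw [← h1, ← hdeg, Multiset.countP_map]
  calc k < T.card := hcard
    _ ≤ (Finset.univ.filter (fun v => c ≤ (G.neighborSet v).ncard)).card := by
        apply Finset.card_le_card
        intro v hv
        simp [hT v hv]
    _ = Multiset.card (Multiset.filter (fun v => c ≤ (G.neighborSet v).ncard) Finset.univ.val) :=
        rfl

lemma neighborSet_subset_compl {V : Type} (G : SimpleGraph V) (v : V) :
    G.neighborSet v ⊆ {v}ᶜ := by
  intro w hw
  simp only [Set.mem_compl_iff, Set.mem_singleton_iff]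
  rintro rfl
  exact G.irrefl hw

lemma ncard_compl_singleton {V : Type} [Fintype V] (v : V) :
    ({v}ᶜ : Set V).ncard = Fintype.card V - 1 := by
  have := Set.ncard_add_ncard_compl ({v} : Set V)
  rw [Set.ncard_singleton] at this
  rw [Nat.card_eq_fintype_card] at this
  omega

lemma deg_le {V : Type} [Fintype V] (G : SimpleGraph V) (v : V) :
    (G.neighborSet v).ncard ≤ Fintype.card V - 1 := by
  rw [← ncard_compl_singleton v]
  exact Set.ncard_le_ncard (neighborSet_subset_compl G v) (Set.toFinite _)

lemma adj_of_full_deg {V : Type} [Fintype V] (G : SimpleGraph V) (v : V)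
    (h : (G.neighborSet v).ncard = Fintype.card V - 1)
    (w : V) (hw : w ≠ v) : G.Adj v w := by
  have heq : G.neighborSet v = {v}ᶜ := by
    apply Set.eq_of_subset_of_ncard_le (neighborSet_subset_compl G v)
    rw [h, ncard_compl_singleton]
  have : w ∈ G.neighborSet v := by rw [heq]; simpa using hw
  exact this

lemma exists_pair_of_count {V : Type} [Fintype V] (d : V → ℕ) (c : ℕ)
    (h : 2 ≤ (Finset.univ.filter (fun v => d v = c)).card) :
    ∃ u v : V, u ≠ v ∧ d u = c ∧ d v = c := by
  have h2 : 1 < (Finset.univ.filter (fun v => d v = c)).card := by omega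
  obtain ⟨u, hu, v, hv, huv⟩ := Finset.one_lt_card.1 h2
  simp only [Finset.mem_filter] at hu hv
  exact ⟨u, v, huv, hu.2, hv.2⟩

lemma card3 {α : Type} [DecidableEq α] {a b c : α} (h1 : a≠b) (h2 : a≠c) (h3 : b≠c) :
    ({a,b,c} : Finset α).card = 3 := by
  simp [Finset.card_insert_of_notMem, Finset.mem_insert, Finset.mem_singleton, h1, h2, h3]

lemma card4 {α : Type} [DecidableEq α] {a b c d : α} (h1 : a≠b) (h2 : a≠c) (h3 : a≠d)
    (h4 : b≠c) (h5 : b≠d) (h6 : c≠d) : ({a,b,c,d} : Finset α).card = 4 := by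
  simp [Finset.card_insert_of_notMem, Finset.mem_insert, Finset.mem_singleton,
    h1, h2, h3, h4, h5, h6]

lemma card5 {α : Type} [DecidableEq α] {a b c d e : α} (h1 : a≠b) (h2 : a≠c) (h3 : a≠d)
    (h4 : a≠e) (h5 : b≠c) (h6 : b≠d) (h7 : b≠e) (h8 : c≠d) (h9 : c≠e) (h10 : d≠e) :
    ({a,b,c,d,e} : Finset α).card = 5 := by
  simp [Finset.card_insert_of_notMem, Finset.mem_insert, Finset.mem_singleton,
    h1, h2, h3, h4, h5, h6, h7, h8, h9, h10]

lemma deg_ge_of_finset {V : Type} [Fintype V] [DecidableEq V] (G : SimpleGraph V) (w : V)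
    (T : Finset V) (hT : ∀ x ∈ T, G.Adj w x) : T.card ≤ (G.neighborSet w).ncard := by
  rw [← Set.ncard_coe_finset]
  exact Set.ncard_le_ncard (fun x hx => hT x (by simpa using hx)) (Set.toFinite _)

lemma fin3_third : ∀ i j : Fin 3, i ≠ j → ∃ k : Fin 3, k ≠ i ∧ k ≠ j := by decide

end helpers

/-- `π` is the degree sequence (as a multiset) of the simple graph `G`. -/
def IsDegSeqOf {V : Type} [Fintype V] (G : SimpleGraph V) (π : List ℕ) : Prop :=
  Multiset.map (fun v => (G.neighborSet v).ncard) Finset.univ.val = (π : Multiset ℕ)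

/-- `π` is graphic: it is realized by some simple graph on `π.length` vertices. -/
def IsGraphic (π : List ℕ) : Prop :=
  ∃ G : SimpleGraph (Fin π.length), IsDegSeqOf G π

/-- `π` is potentially `H`-graphic: some realization of `π` contains a copy of `H`
as a subgraph (an injective graph homomorphism from `H`). -/
def PotentiallyGraphic {W : Type} (H : SimpleGraph W) (π : List ℕ) : Prop :=
  ∃ G : SimpleGraph (Fin π.length), IsDegSeqOf G π ∧ ∃ f : H →g G, Function.Injective f

/-- The complete bipartite graph `K_{3,3}`. -/
def K33 : SimpleGraph (Fin 3 ⊕ Fin 3) := completeBipartiteGraph (Fin 3) (Fin 3)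

/-- `K_6 − C_6`, the complement of the 6-cycle. -/
def K6mC6 : SimpleGraph (Fin 6) := (SimpleGraph.cycleGraph 6)ᶜ

/-- Necessity of condition (3) in Theorem 3.1: if a graphic sequence with `n ≥ 6` terms
is potentially `K_{3,3}`-graphic and `d₂ = n−1`, then `d₃ ≥ 5` or `d₆ ≥ 4`.
Here `π.getD (i-1) 0` is the `i`-th term `dᵢ`. -/
theorem K33_necessary_condition_3
    (n : ℕ) (hn : 6 ≤ n) (π : List ℕ) (hlen : π.length = n)
    (hsorted : π.Pairwise (· ≥ ·)) (hgraphic : IsGraphic π)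
    (hpot : PotentiallyGraphic K33 π) (hd2 : π.getD 1 0 = n - 1) :
    5 ≤ π.getD 2 0 ∨ 4 ≤ π.getD 5 0 := by
  classical
  obtain ⟨G, hdeg, f, hf⟩ := hpot
  have hdeg' : IsDegSeqOf' G π := hdeg
  set d : Fin π.length → ℕ := fun v => (G.neighborSet v).ncard with hd
  have hcardV : Fintype.card (Fin π.length) = n := by simp [hlen]
  -- the first two entries of π both equal n - 1
  obtain ⟨a, l1, rfl⟩ : ∃ a l1, π = a :: l1 := by
    cases π with
    | nil => simp at hlen; omega
    | cons a l => exact ⟨a, l, rfl⟩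
  obtain ⟨b, l2, rfl⟩ : ∃ b l2, l1 = b :: l2 := by
    cases l1 with
    | nil => simp at hlen; omega
    | cons b l => exact ⟨b, l, rfl⟩
  have hb : b = n - 1 := by simpa using hd2
  have hab : b ≤ a := (List.pairwise_cons.1 hsorted).1 b (by simp)
  have ha_le : a ≤ n - 1 := by
    have hmem : a ∈ ((a :: b :: l2 : List ℕ) : Multiset ℕ) := by simp
    rw [← hdeg'] at hmem
    obtain ⟨w, _, hw⟩ := Multiset.mem_map.1 hmem
    have := deg_le G w
    rw [hcardV] at this
    omega
  have ha : a = n - 1 := by omega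
  -- two distinct vertices of full degree
  obtain ⟨u, v, huv, hu, hv⟩ : ∃ u v, u ≠ v ∧ d u = n - 1 ∧ d v = n - 1 := by
    apply exists_pair_of_count d (n-1)
    have : Multiset.countP (fun x => x = n - 1) ((a :: b :: l2 : List ℕ) : Multiset ℕ)
        = (Finset.univ.filter (fun w => d w = n - 1)).card := by
      rw [← hdeg', Multiset.countP_map]; rfl
    have h2 : 2 ≤ Multiset.countP (fun x => x = n - 1)
        ((a :: b :: l2 : List ℕ) : Multiset ℕ) := by
      have : Multiset.countP (fun x => x = n - 1) ((a :: b :: l2 : List ℕ) : Multiset ℕ)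
          = (a :: b :: l2).countP (fun x => decide (x = n - 1)) := rfl
      rw [this, List.countP_cons, List.countP_cons]
      simp [ha, hb]
    omega
  have hadju : ∀ w, w ≠ u → G.Adj u w :=
    fun w hw => adj_of_full_deg G u (by rw [hcardV]; exact hu) w hw
  have hadjv : ∀ w, w ≠ v → G.Adj v w :=
    fun w hw => adj_of_full_deg G v (by rw [hcardV]; exact hv) w hw
  set F : Fin 3 ⊕ Fin 3 → Fin (a :: b :: l2).length := fun x => f x with hF
  have hFne : ∀ {x y}, x ≠ y → F x ≠ F y := fun h hc => h (hf hc)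
  have hAdj : ∀ i j : Fin 3, G.Adj (F (Sum.inl i)) (F (Sum.inr j)) := by
    intro i j
    exact f.map_adj (by simp [K33, completeBipartiteGraph])
  have hn5 : 5 ≤ n - 1 := by omega
  -- case analysis
  by_cases hA : ∃ i j : Fin 3, i ≠ j ∧ ((u = F (Sum.inl i) ∧ v = F (Sum.inl j)) ∨
      (u = F (Sum.inr i) ∧ v = F (Sum.inr j)))
  · -- u, v on same side: d₃ ≥ 5
    left
    obtain ⟨i, j, hij, hcase⟩ := hA
    obtain ⟨k, hki, hkj⟩ := fin3_third i j hij
    -- produce a third vertex z with degree ≥ 5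
    have hz : ∃ z, z ≠ u ∧ z ≠ v ∧ 5 ≤ d z := by
      rcases hcase with ⟨hu', hv'⟩ | ⟨hu', hv'⟩
      · refine ⟨F (Sum.inl k), hu' ▸ hFne (by simp [hki]), hv' ▸ hFne (by simp [hkj]), ?_⟩
        have hsub : ({F (Sum.inr 0), F (Sum.inr 1), F (Sum.inr 2), u, v} :
            Finset (Fin (a :: b :: l2).length)).card ≤ d (F (Sum.inl k)) := by
          apply deg_ge_of_finset
          intro x hx
          simp only [Finset.mem_insert, Finset.mem_singleton] at hx
          rcases hx with rfl | rfl | rfl | rfl | rfl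
          · exact hAdj k 0
          · exact hAdj k 1
          · exact hAdj k 2
          · exact (hadju _ (hu' ▸ hFne (by simp [hki]))).symm
          · exact (hadjv _ (hv' ▸ hFne (by simp [hkj]))).symm
        rw [card5 (hFne (by simp)) (hFne (by simp)) (hu' ▸ (hFne (by simp)).symm)
          (hv' ▸ (hFne (by simp)).symm) (hFne (by simp)) (hu' ▸ (hFne (by simp)).symm)
          (hv' ▸ (hFne (by simp)).symm) (hu' ▸ (hFne (by simp)).symm)
          (hv' ▸ (hFne (by simp)).symm) huv] at hsub
        exact hsub
      · refine ⟨F (Sum.inr k), hu' ▸ hFne (by simp [hki]), hv' ▸ hFne (by simp [hkj]), ?_⟩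
        have hsub : ({F (Sum.inl 0), F (Sum.inl 1), F (Sum.inl 2), u, v} :
            Finset (Fin (a :: b :: l2).length)).card ≤ d (F (Sum.inr k)) := by
          apply deg_ge_of_finset
          intro x hx
          simp only [Finset.mem_insert, Finset.mem_singleton] at hx
          rcases hx with rfl | rfl | rfl | rfl | rfl
          · exact (hAdj 0 k).symm
          · exact (hAdj 1 k).symm
          · exact (hAdj 2 k).symm
          · exact (hadju _ (hu' ▸ hFne (by simp [hki]))).symm
          · exact (hadjv _ (hv' ▸ hFne (by simp [hkj]))).symm
        rw [card5 (hFne (by simp)) (hFne (by simp)) (hu' ▸ (hFne (by simp)).symm)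
          (hv' ▸ (hFne (by simp)).symm) (hFne (by simp)) (hu' ▸ (hFne (by simp)).symm)
          (hv' ▸ (hFne (by simp)).symm) (hu' ▸ (hFne (by simp)).symm)
          (hv' ▸ (hFne (by simp)).symm) huv] at hsub
        exact hsub
    obtain ⟨z, hzu, hzv, hz5⟩ := hz
    apply getD_ge_of_many G _ hdeg' hsorted 2 5 {u, v, z}
    · intro w hw
      simp only [Finset.mem_insert, Finset.mem_singleton] at hw
      rcases hw with rfl | rfl | rfl
      · rw [show (G.neighborSet w).ncard = d w from rfl, hu]; omega
      · rw [show (G.neighborSet w).ncard = d w from rfl, hv]; omega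
      · exact hz5
    · rw [card3 huv (Ne.symm hzu) (Ne.symm hzv)]; omega
  · -- u, v not on the same side: d₆ ≥ 4
    right
    push_neg at hA
    have key : ∀ x : Fin 3 ⊕ Fin 3, F x ≠ u → F x ≠ v → 4 ≤ d (F x) := by
      intro x hxu hxv
      rcases x with i | i
      · -- x = inl i; neighbors F (inr 0..2) plus one of u, v
        by_cases hu' : ∃ p, u = F (Sum.inr p)
        · obtain ⟨p, hp⟩ := hu'
          have hvnot : ∀ q : Fin 3, v ≠ F (Sum.inr q) := by
            intro q hq
            rcases eq_or_ne p q with rfl | hpq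
            · exact huv (hp.trans hq.symm)
            · rcases hA p q hpq with ⟨h1, h2⟩
              exact (h2 hp) hq
          have hsub : ({F (Sum.inr 0), F (Sum.inr 1), F (Sum.inr 2), v} :
              Finset (Fin (a :: b :: l2).length)).card ≤ d (F (Sum.inl i)) := by
            apply deg_ge_of_finset
            intro x hx
            simp only [Finset.mem_insert, Finset.mem_singleton] at hx
            rcases hx with rfl | rfl | rfl | rfl
            · exact hAdj i 0
            · exact hAdj i 1
            · exact hAdj i 2
            · exact (hadjv _ hxv).symm
          rw [card4 (hFne (by simp)) (hFne (by simp)) (Ne.symm (hvnot 0))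
            (hFne (by simp)) (Ne.symm (hvnot 1)) (Ne.symm (hvnot 2))] at hsub
          exact hsub
        · push_neg at hu'
          have hsub : ({F (Sum.inr 0), F (Sum.inr 1), F (Sum.inr 2), u} :
              Finset (Fin (a :: b :: l2).length)).card ≤ d (F (Sum.inl i)) := by
            apply deg_ge_of_finset
            intro x hx
            simp only [Finset.mem_insert, Finset.mem_singleton] at hx
            rcases hx with rfl | rfl | rfl | rfl
            · exact hAdj i 0
            · exact hAdj i 1
            · exact hAdj i 2
            · exact (hadju _ hxu).symm
          rw [card4 (hFne (by simp)) (hFne (by simp)) (Ne.symm (hu' 0))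
            (hFne (by simp)) (Ne.symm (hu' 1)) (Ne.symm (hu' 2))] at hsub
          exact hsub
      · by_cases hu' : ∃ p, u = F (Sum.inl p)
        · obtain ⟨p, hp⟩ := hu'
          have hvnot : ∀ q : Fin 3, v ≠ F (Sum.inl q) := by
            intro q hq
            rcases eq_or_ne p q with rfl | hpq
            · exact huv (hp.trans hq.symm)
            · rcases hA p q hpq with ⟨h1, h2⟩
              exact (h1 hp) hq
          have hsub : ({F (Sum.inl 0), F (Sum.inl 1), F (Sum.inl 2), v} :
              Finset (Fin (a :: b :: l2).length)).card ≤ d (F (Sum.inr i)) := by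
            apply deg_ge_of_finset
            intro x hx
            simp only [Finset.mem_insert, Finset.mem_singleton] at hx
            rcases hx with rfl | rfl | rfl | rfl
            · exact (hAdj 0 i).symm
            · exact (hAdj 1 i).symm
            · exact (hAdj 2 i).symm
            · exact (hadjv _ hxv).symm
          rw [card4 (hFne (by simp)) (hFne (by simp)) (Ne.symm (hvnot 0))
            (hFne (by simp)) (Ne.symm (hvnot 1)) (Ne.symm (hvnot 2))] at hsub
          exact hsub
        · push_neg at hu'
          have hsub : ({F (Sum.inl 0), F (Sum.inl 1), F (Sum.inl 2), u} :
              Finset (Fin (a :: b :: l2).length)).card ≤ d (F (Sum.inr i)) := by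
            apply deg_ge_of_finset
            intro x hx
            simp only [Finset.mem_insert, Finset.mem_singleton] at hx
            rcases hx with rfl | rfl | rfl | rfl
            · exact (hAdj 0 i).symm
            · exact (hAdj 1 i).symm
            · exact (hAdj 2 i).symm
            · exact (hadju _ hxu).symm
          rw [card4 (hFne (by simp)) (hFne (by simp)) (Ne.symm (hu' 0))
            (hFne (by simp)) (Ne.symm (hu' 1)) (Ne.symm (hu' 2))] at hsub
          exact hsub
    apply getD_ge_of_many G _ hdeg' hsorted 5 4
      ({u, v} ∪ Finset.image F Finset.univ)
    · intro w hw
      by_cases hwu : w = u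
      · subst hwu; rw [show (G.neighborSet w).ncard = d w from rfl, hu]; omega
      by_cases hwv : w = v
      · subst hwv; rw [show (G.neighborSet w).ncard = d w from rfl, hv]; omega
      have hwS : w ∈ Finset.image F Finset.univ := by
        rcases Finset.mem_union.1 hw with h | h
        · simp only [Finset.mem_insert, Finset.mem_singleton] at h; tauto
        · exact h
      obtain ⟨x, _, rfl⟩ := Finset.mem_image.1 hwS
      exact key x hwu hwv
    · have h6 : (Finset.image F Finset.univ).card = 6 := by
        rw [Finset.card_image_of_injective _ hf]
        simp
      have : (Finset.image F Finset.univ).card ≤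
          ({u, v} ∪ Finset.image F Finset.univ).card :=
        Finset.card_le_card Finset.subset_union_right
      omega
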